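/- Let W = {p ∈ Δ_n : Σ_i p_i y_i φ̃_{x_i} = 0} be nonempty and suppose ρ_K < 0. Then for every q ∈ Δ_n, the Euclidean distance from q to W satisfies dist(q, W) ≤ min{√2, √2 ‖q‖_G / |ρ_K|}, where ‖q‖_G = ‖Σ_i q_i y_i φ̃_{x_i}‖_K. -/

import Mathlib

open scoped RealInnerProductSpace

theorem stmt11 (n : ℕ) [NeZero n] {H : Type*} [NormedAddCommGroup H] [InnerProductSpace ℝ H]
    [CompleteSpace H]
    (v : Fin n → H) (hv : ∀ i, ‖v i‖ = 1)
    (ρ : ℝ)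
    (hρ : ρ = ⨆ f : {f : H // ‖f‖ = 1},
      ⨅ p : stdSimplex ℝ (Fin n), ⟪(f : H), ∑ i, (p : Fin n → ℝ) i • v i⟫)
    (hneg : ρ < 0)
    (W : Set (EuclideanSpace ℝ (Fin n)))
    (hW : W = {p : EuclideanSpace ℝ (Fin n) |
      (∀ i, 0 ≤ p i) ∧ ∑ i, p i = 1 ∧ ∑ i, p i • v i = (0 : H)})
    (hWne : W.Nonempty)
    (q : EuclideanSpace ℝ (Fin n)) (hq1 : ∀ i, 0 ≤ q i) (hq2 : ∑ i, q i = 1) :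
    Metric.infDist q W ≤ min (Real.sqrt 2) (Real.sqrt 2 * ‖∑ i, q i • v i‖ / |ρ|) := by
  classical
  obtain ⟨w0, hw0⟩ := hWne
  rw [hW] at hw0
  obtain ⟨hw01, hw02, hw03⟩ := hw0
  -- the point of the simplex mapping to 0
  have hp0 : (fun i => w0 i) ∈ stdSimplex ℝ (Fin n) := ⟨hw01, hw02⟩
  have hμ0 : ∑ i, w0 i • v i = (0 : H) := hw03
  have hρpos : 0 < |ρ| := abs_pos.mpr hneg.ne
  haveI : Nonempty (stdSimplex ℝ (Fin n)) := ⟨⟨fun i => w0 i, hp0⟩⟩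
  -- norm bound over the simplex
  have hμle : ∀ p : Fin n → ℝ, p ∈ stdSimplex ℝ (Fin n) → ‖∑ i, p i • v i‖ ≤ 1 := by
    intro p hp
    calc ‖∑ i, p i • v i‖ ≤ ∑ i, ‖p i • v i‖ := norm_sum_le _ _
      _ = ∑ i, p i := by
          refine Finset.sum_congr rfl fun i _ => ?_
          rw [norm_smul, hv i, mul_one, Real.norm_eq_abs, abs_of_nonneg (hp.1 i)]
      _ = 1 := hp.2
  -- every inner-product family over the simplex is bounded below
  have hbelow : ∀ f : {f : H // ‖f‖ = 1},
      BddBelow (Set.range fun p : stdSimplex ℝ (Fin n) =>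
        ⟪(f : H), ∑ i, (p : Fin n → ℝ) i • v i⟫) := by
    intro f
    refine ⟨-1, ?_⟩
    rintro x ⟨p, rfl⟩
    have h1 := abs_real_inner_le_norm (f : H) (∑ i, (p : Fin n → ℝ) i • v i)
    have h2 := hμle (p : Fin n → ℝ) p.2
    have h3 := f.2
    rw [h3, one_mul] at h1
    have := neg_le_of_abs_le (h1.trans h2)
    exact this
  -- each inf is ≤ 0 (witnessed by w0)
  have hFle : ∀ f : {f : H // ‖f‖ = 1},
      (⨅ p : stdSimplex ℝ (Fin n), ⟪(f : H), ∑ i, (p : Fin n → ℝ) i • v i⟫) ≤ 0 := by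
    intro f
    have := ciInf_le (f := fun p : stdSimplex ℝ (Fin n) =>
      ⟪(f : H), ∑ i, (p : Fin n → ℝ) i • v i⟫) (hbelow f) (⟨fun i => w0 i, hp0⟩ : stdSimplex ℝ (Fin n))
    refine this.trans (le_of_eq ?_)
    show ⟪(f : H), ∑ i, w0 i • v i⟫ = 0
    rw [hμ0, inner_zero_right]
  have hbddF : BddAbove (Set.range fun f : {f : H // ‖f‖ = 1} =>
      ⨅ p : stdSimplex ℝ (Fin n), ⟪(f : H), ∑ i, (p : Fin n → ℝ) i • v i⟫) := by
    refine ⟨0, ?_⟩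
    rintro x ⟨f, rfl⟩
    exact hFle f
  -- KEY: the ball of radius |ρ| is contained in the image of the simplex
  have key : ∀ h : H, ‖h‖ ≤ |ρ| →
      ∃ p : Fin n → ℝ, p ∈ stdSimplex ℝ (Fin n) ∧ ∑ i, p i • v i = h := by
    intro h hh
    by_contra hcon
    push_neg at hcon
    have hnotmem : h ∉ (fun p : Fin n → ℝ => ∑ i, p i • v i) '' stdSimplex ℝ (Fin n) := by
      rintro ⟨p, hp, hpe⟩
      exact hcon p hp hpe
    have hlin : IsLinearMap ℝ (fun p : Fin n → ℝ => ∑ i, p i • v i) := by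
      constructor
      · intro a b
        simp [add_smul, Finset.sum_add_distrib]
      · intro c a
        simp [smul_smul, Finset.smul_sum]
    have hconv : Convex ℝ ((fun p : Fin n → ℝ => ∑ i, p i • v i) '' stdSimplex ℝ (Fin n)) :=
      (convex_stdSimplex ℝ _).is_linear_image hlin
    have hcomp : IsCompact ((fun p : Fin n → ℝ => ∑ i, p i • v i) '' stdSimplex ℝ (Fin n)) :=
      (isCompact_stdSimplex ℝ _).image
        (continuous_finset_sum _ fun i _ => (continuous_apply i).smul continuous_const)
    obtain ⟨f, u, hfu, hub⟩ :=
      geometric_hahn_banach_point_closed hconv hcomp.isClosed hnotmem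
    set z : H := (InnerProductSpace.toDual ℝ H).symm f with hz
    have hzx : ∀ x : H, ⟪z, x⟫ = f x := fun x => InnerProductSpace.toDual_symm_apply
    have hu0 : u < 0 := by
      have h0 := hub 0 ⟨fun i => w0 i, hp0, hμ0⟩
      simpa using h0
    have hzne : z ≠ 0 := by
      intro h0
      have hfh : f h = 0 := by rw [← hzx, h0]; simp
      linarith [hfu]
    have hznorm : 0 < ‖z‖ := norm_pos_iff.mpr hzne
    have he : ‖(‖z‖⁻¹ • z : H)‖ = 1 := by
      rw [norm_smul, Real.norm_eq_abs, abs_of_pos (inv_pos.mpr hznorm),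
        inv_mul_cancel₀ hznorm.ne']
    set e : {f : H // ‖f‖ = 1} := ⟨‖z‖⁻¹ • z, he⟩ with hedef
    have h1 : (⨅ p : stdSimplex ℝ (Fin n), ⟪(e : H), ∑ i, (p : Fin n → ℝ) i • v i⟫) ≤ ρ := by
      rw [hρ]
      exact le_ciSup hbddF e
    have h2 : u / ‖z‖ ≤ ⨅ p : stdSimplex ℝ (Fin n), ⟪(e : H), ∑ i, (p : Fin n → ℝ) i • v i⟫ := by
      refine le_ciInf fun p => ?_
      have hu1 : u < f (∑ i, (p : Fin n → ℝ) i • v i) := hub _ ⟨p, p.2, rfl⟩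
      have heq : ⟪(e : H), ∑ i, (p : Fin n → ℝ) i • v i⟫
          = ‖z‖⁻¹ * f (∑ i, (p : Fin n → ℝ) i • v i) := by
        rw [hedef]
        simp only [real_inner_smul_left, hzx]
      rw [heq, div_eq_inv_mul]
      exact mul_le_mul_of_nonneg_left hu1.le (inv_pos.mpr hznorm).le
    have h3 : ⟪(e : H), h⟫ < u / ‖z‖ := by
      have heq : ⟪(e : H), h⟫ = ‖z‖⁻¹ * f h := by
        rw [hedef]
        simp only [real_inner_smul_left, hzx]
      rw [heq, div_eq_inv_mul]
      exact mul_lt_mul_of_pos_left hfu (inv_pos.mpr hznorm)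
    have h4 : ρ ≤ ⟪(e : H), h⟫ := by
      have habs := abs_real_inner_le_norm (e : H) h
      rw [e.2, one_mul] at habs
      have := neg_le_of_abs_le (habs.trans hh)
      have hρ' : -|ρ| = ρ := by rw [abs_of_neg hneg, neg_neg]
      linarith
    linarith
  -- main argument
  by_cases hg : (∑ i, q i • v i : H) = 0
  · have hqW : q ∈ W := by
      rw [hW]
      exact ⟨hq1, hq2, hg⟩
    rw [Metric.infDist_zero_of_mem hqW]
    refine le_min (Real.sqrt_nonneg 2) ?_
    rw [hg, norm_zero, mul_zero, zero_div]
  · have hgpos : 0 < ‖(∑ i, q i • v i : H)‖ := norm_pos_iff.mpr hg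
    set G : H := ∑ i, q i • v i with hGdef
    have hnormh : ‖(-(|ρ| / ‖G‖) • G : H)‖ ≤ |ρ| := by
      rw [norm_smul, Real.norm_eq_abs, abs_neg, abs_of_pos (div_pos hρpos hgpos),
        div_mul_cancel₀ _ hgpos.ne']
    obtain ⟨p, hp, hpe⟩ := key (-(|ρ| / ‖G‖) • G) hnormh
    set t : ℝ := ‖G‖ / (‖G‖ + |ρ|) with htdef
    have htd : 0 < ‖G‖ + |ρ| := by linarith
    have ht0 : 0 ≤ t := div_nonneg hgpos.le htd.le
    have ht1 : t ≤ 1 := by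
      rw [htdef, div_le_one htd]
      linarith
    set w : EuclideanSpace ℝ (Fin n) := WithLp.toLp 2 (fun i => (1 - t) * q i + t * p i) with hwdef
    have hwW : w ∈ W := by
      rw [hW]
      refine ⟨fun i => add_nonneg (mul_nonneg (by linarith) (hq1 i))
        (mul_nonneg ht0 (hp.1 i)), ?_, ?_⟩
      · show ∑ i, ((1 - t) * q i + t * p i) = 1
        rw [Finset.sum_add_distrib, ← Finset.mul_sum, ← Finset.mul_sum, hq2, hp.2]
        ring
      · show ∑ i, ((1 - t) * q i + t * p i) • v i = (0 : H)
        have hsplit : ∑ i, ((1 - t) * q i + t * p i) • v i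
            = (1 - t) • G + t • (∑ i, p i • v i) := by
          rw [hGdef, Finset.smul_sum, Finset.smul_sum, ← Finset.sum_add_distrib]
          refine Finset.sum_congr rfl fun i _ => ?_
          rw [add_smul, mul_smul, mul_smul]
        rw [hsplit, hpe, smul_smul, ← add_smul]
        have hscal : (1 - t) + t * -(|ρ| / ‖G‖) = 0 := by
          rw [htdef]
          field_simp
          ring
        rw [hscal, zero_smul]
    have hsumq : ∑ i, (q i) ^ 2 ≤ 1 := by
      calc ∑ i, (q i) ^ 2 ≤ ∑ i, q i := by
            refine Finset.sum_le_sum fun i _ => ?_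
            have hle1 : q i ≤ 1 := by
              rw [← hq2]
              exact Finset.single_le_sum (fun j _ => hq1 j) (Finset.mem_univ i)
            nlinarith [hq1 i]
        _ = 1 := hq2
    have hsump : ∑ i, (p i) ^ 2 ≤ 1 := by
      calc ∑ i, (p i) ^ 2 ≤ ∑ i, p i := by
            refine Finset.sum_le_sum fun i _ => ?_
            have hle1 : p i ≤ 1 := by
              rw [← hp.2]
              exact Finset.single_le_sum (fun j _ => hp.1 j) (Finset.mem_univ i)
            nlinarith [hp.1 i]
        _ = 1 := hp.2
    have hsum2 : ∑ i, (q i - p i) ^ 2 ≤ 2 := by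
      calc ∑ i, (q i - p i) ^ 2 ≤ ∑ i, ((q i) ^ 2 + (p i) ^ 2) := by
            refine Finset.sum_le_sum fun i _ => ?_
            nlinarith [mul_nonneg (hq1 i) (hp.1 i)]
        _ = ∑ i, (q i) ^ 2 + ∑ i, (p i) ^ 2 := Finset.sum_add_distrib
        _ ≤ 1 + 1 := add_le_add hsumq hsump
        _ = 2 := by norm_num
    have hdist : dist q w ≤ t * Real.sqrt 2 := by
      rw [EuclideanSpace.dist_eq]
      have hterm : ∀ i, dist (q i) (w i) ^ 2 = t ^ 2 * (q i - p i) ^ 2 := by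
        intro i
        rw [Real.dist_eq, sq_abs]
        show (q i - ((1 - t) * q i + t * p i)) ^ 2 = t ^ 2 * (q i - p i) ^ 2
        ring
      calc Real.sqrt (∑ i, dist (q i) (w i) ^ 2)
          = Real.sqrt (t ^ 2 * ∑ i, (q i - p i) ^ 2) := by
            rw [Finset.mul_sum]
            exact congrArg Real.sqrt (Finset.sum_congr rfl fun i _ => hterm i)
        _ ≤ Real.sqrt (t ^ 2 * 2) :=
            Real.sqrt_le_sqrt (mul_le_mul_of_nonneg_left hsum2 (sq_nonneg t))
        _ = t * Real.sqrt 2 := by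
            rw [Real.sqrt_mul (sq_nonneg t), Real.sqrt_sq ht0]
    refine le_trans (Metric.infDist_le_dist_of_mem hwW) ?_
    refine le_min ?_ ?_
    · refine hdist.trans ?_
      nlinarith [Real.sqrt_nonneg 2]
    · refine hdist.trans ?_
      have heq : t * Real.sqrt 2 = Real.sqrt 2 * ‖G‖ / (‖G‖ + |ρ|) := by
        rw [htdef]; ring
      rw [heq]
      gcongr
      linarith
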